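/- For every n ∈ ℕ, the map β sending y ∈ F to the vector x = (x_{ij}) ∈ ℝ^{n(n+1)/2} defined by x_{ii} = y_{2i-1,2i} for i ∈ {1,…,n} and x_{ij} = y_{2j-1,2j} − y_{2i,2j} for 1 ≤ i < j ≤ n is a bijection from F onto BQP(n). -/

import Mathlib

/-- `y ∈ LOP m`: `y` is the characteristic vector of a linear order (permutation `π`)
on `{1, …, m}`, with coordinates `y i j` for `1 ≤ i < j ≤ m` equal to `1` iff `π i < π j`;
coordinates outside the index range are normalized to `0`. -/
def LOP (m : ℕ) : Set (ℕ → ℕ → ℝ) :=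
  {y | (∀ i j, ¬(1 ≤ i ∧ i < j ∧ j ≤ m) → y i j = 0) ∧
    ∃ π : ℕ → ℕ, Set.BijOn π (Set.Icc 1 m) (Set.Icc 1 m) ∧
      ∀ i j, 1 ≤ i → i < j → j ≤ m → y i j = if π i < π j then (1 : ℝ) else 0}

/-- The face `F ⊆ LOP (2n)` cut out by the supporting hyperplanes
`y_{2i,2j-1} = 0`, `y_{2i-1,2i} + y_{2i,2j} - y_{2i-1,2j} = 0` and
`y_{2i-1,2j-1} + y_{2j-1,2j} - y_{2i-1,2j} = 0` for all `1 ≤ i < j ≤ n`. -/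
def FaceF (n : ℕ) : Set (ℕ → ℕ → ℝ) :=
  {y | y ∈ LOP (2 * n) ∧ ∀ i j, 1 ≤ i → i < j → j ≤ n →
    y (2 * i) (2 * j - 1) = 0 ∧
    y (2 * i - 1) (2 * i) + y (2 * i) (2 * j) - y (2 * i - 1) (2 * j) = 0 ∧
    y (2 * i - 1) (2 * j - 1) + y (2 * j - 1) (2 * j) - y (2 * i - 1) (2 * j) = 0}

/-- `x ∈ BQP n`: the vertex set of the boolean quadric polytope: 0/1 vectors with
coordinates `x i j` for `1 ≤ i ≤ j ≤ n` satisfying `x i j = x i i * x j j` for `i < j`;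
coordinates outside the index range are normalized to `0`. -/
def BQP (n : ℕ) : Set (ℕ → ℕ → ℝ) :=
  {x | (∀ i j, ¬(1 ≤ i ∧ i ≤ j ∧ j ≤ n) → x i j = 0) ∧
    (∀ i j, 1 ≤ i → i ≤ j → j ≤ n → x i j = 0 ∨ x i j = 1) ∧
    (∀ i j, 1 ≤ i → i < j → j ≤ n → x i j = x i i * x j j)}


/-- The map `β` sending `y ∈ F` to `x = β y` with `x i i = y (2i-1) (2i)` and
`x i j = y (2j-1) (2j) - y (2i) (2j)` for `1 ≤ i < j ≤ n`
(coordinates outside the index range are `0`). -/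
def beta (n : ℕ) (y : ℕ → ℕ → ℝ) : ℕ → ℕ → ℝ := fun i j =>
  if 1 ≤ i ∧ i = j ∧ j ≤ n then y (2 * i - 1) (2 * i)
  else if 1 ≤ i ∧ i < j ∧ j ≤ n then y (2 * j - 1) (2 * j) - y (2 * i) (2 * j)
  else 0


noncomputable def keyf (n : ℕ) (b : ℕ → ℝ) : ℕ → ℕ := fun p =>
  if p % 2 = 1 then
    (if b ((p+1)/2) = 1 then n - (p+1)/2 else n + 2*(n - (p+1)/2) + 1)
  else
    (if b (p/2) = 1 then 3*n + (n - p/2) else n + 2*(n - p/2))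

noncomputable def rankf (n : ℕ) (b : ℕ → ℝ) : ℕ → ℕ := fun p =>
  ((Finset.Icc 1 (2*n)).filter (fun q => keyf n b q ≤ keyf n b p)).card

lemma key_odd (n : ℕ) (b : ℕ → ℝ) (i : ℕ) (hi : 1 ≤ i) :
    keyf n b (2*i-1) = if b i = 1 then n - i else n + 2*(n-i) + 1 := by
  have h1 : (2*i-1) % 2 = 1 := by omega
  have h2 : (2*i-1+1)/2 = i := by omega
  simp only [keyf, h1, h2, if_true, if_pos rfl]

lemma key_even (n : ℕ) (b : ℕ → ℝ) (i : ℕ) (hi : 1 ≤ i) :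
    keyf n b (2*i) = if b i = 1 then 3*n + (n-i) else n + 2*(n-i) := by
  have h1 : ¬ ((2*i) % 2 = 1) := by omega
  have h2 : (2*i)/2 = i := by omega
  simp only [keyf, h1, h2, if_false, if_neg h1]

lemma key_inj (n : ℕ) (b : ℕ → ℝ) {p q : ℕ} (hp : p ∈ Finset.Icc 1 (2*n))
    (hq : q ∈ Finset.Icc 1 (2*n)) (h : keyf n b p = keyf n b q) : p = q := by
  simp only [Finset.mem_Icc] at hp hq
  simp only [keyf] at h
  split_ifs at h <;> omega

lemma rank_lt_iff (n : ℕ) (b : ℕ → ℝ) {p q : ℕ} (hp : p ∈ Finset.Icc 1 (2*n))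
    (hq : q ∈ Finset.Icc 1 (2*n)) :
    rankf n b p < rankf n b q ↔ keyf n b p < keyf n b q := by
  constructor
  · intro h
    by_contra hk
    push_neg at hk
    have : rankf n b q ≤ rankf n b p := by
      apply Finset.card_le_card
      intro r hr
      simp only [Finset.mem_filter] at hr ⊢
      exact ⟨hr.1, hr.2.trans hk⟩
    omega
  · intro h
    apply Finset.card_lt_card
    constructor
    · intro r hr
      simp only [Finset.mem_filter] at hr ⊢
      exact ⟨hr.1, hr.2.trans h.le⟩
    · intro hsub
      have hqmem : q ∈ (Finset.Icc 1 (2*n)).filter (fun r => keyf n b r ≤ keyf n b q) := by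
        simp [hq]
      have := hsub hqmem
      simp only [Finset.mem_filter] at this
      omega

lemma rank_bijOn (n : ℕ) (b : ℕ → ℝ) :
    Set.BijOn (rankf n b) (Set.Icc 1 (2*n)) (Set.Icc 1 (2*n)) := by
  have hmaps : Set.MapsTo (rankf n b) (Set.Icc 1 (2*n)) (Set.Icc 1 (2*n)) := by
    intro p hp
    simp only [Set.mem_Icc] at hp ⊢
    constructor
    · have : p ∈ (Finset.Icc 1 (2*n)).filter (fun q => keyf n b q ≤ keyf n b p) := by
        simp [Finset.mem_Icc, hp.1, hp.2]
      have h1 : 0 < rankf n b p := Finset.card_pos.mpr ⟨p, this⟩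
      omega
    · have : rankf n b p ≤ (Finset.Icc 1 (2*n)).card :=
        Finset.card_le_card (Finset.filter_subset _ _)
      simpa [Nat.card_Icc] using this
  have hinj : Set.InjOn (rankf n b) (Set.Icc 1 (2*n)) := by
    intro p hp q hq h
    have hp' : p ∈ Finset.Icc 1 (2*n) := by simpa [Finset.mem_Icc, Set.mem_Icc] using hp
    have hq' : q ∈ Finset.Icc 1 (2*n) := by simpa [Finset.mem_Icc, Set.mem_Icc] using hq
    apply key_inj n b hp' hq'
    rcases lt_trichotomy (keyf n b p) (keyf n b q) with hk | hk | hk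
    · have := (rank_lt_iff n b hp' hq').mpr hk; omega
    · exact hk
    · have := (rank_lt_iff n b hq' hp').mpr hk; omega
  exact ((Set.finite_Icc 1 (2*n)).injOn_iff_bijOn_of_mapsTo hmaps).mp hinj

noncomputable def Yfun (n : ℕ) (b : ℕ → ℝ) : ℕ → ℕ → ℝ := fun p q =>
  if 1 ≤ p ∧ p < q ∧ q ≤ 2*n then
    if p % 2 = 1 then
      if q % 2 = 1 then b ((p+1)/2) * (1 - b ((q+1)/2))
      else if (p+1)/2 = q/2 then b ((p+1)/2)
      else b ((p+1)/2) + b (q/2) - b ((p+1)/2) * b (q/2)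
    else
      if q % 2 = 1 then 0
      else (1 - b (p/2)) * b (q/2)
  else 0

section
variable (n : ℕ) (b : ℕ → ℝ)

lemma Y_diag {i : ℕ} (hi : 1 ≤ i) (hn : i ≤ n) :
    Yfun n b (2*i-1) (2*i) = b i := by
  have h : 1 ≤ 2*i-1 ∧ 2*i-1 < 2*i ∧ 2*i ≤ 2*n := by omega
  have h1 : (2*i-1) % 2 = 1 := by omega
  have h2 : ¬ ((2*i) % 2 = 1) := by omega
  have h3 : (2*i-1+1)/2 = i := by omega
  have h4 : (2*i)/2 = i := by omega
  simp only [Yfun, if_pos h, h1, h2, h3, h4, if_true, if_false, if_pos rfl]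

variable {i j : ℕ} (hi : 1 ≤ i) (hij : i < j) (hj : j ≤ n)
include hi hij hj

lemma Y_oo : Yfun n b (2*i-1) (2*j-1) = b i * (1 - b j) := by
  have h : 1 ≤ 2*i-1 ∧ 2*i-1 < 2*j-1 ∧ 2*j-1 ≤ 2*n := by omega
  have h1 : (2*i-1) % 2 = 1 := by omega
  have h2 : (2*j-1) % 2 = 1 := by omega
  have h3 : (2*i-1+1)/2 = i := by omega
  have h4 : (2*j-1+1)/2 = j := by omega
  simp only [Yfun, if_pos h, h1, h2, h3, h4, if_true]

lemma Y_oe : Yfun n b (2*i-1) (2*j) = b i + b j - b i * b j := by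
  have h : 1 ≤ 2*i-1 ∧ 2*i-1 < 2*j ∧ 2*j ≤ 2*n := by omega
  have h1 : (2*i-1) % 2 = 1 := by omega
  have h2 : ¬ ((2*j) % 2 = 1) := by omega
  have h3 : (2*i-1+1)/2 = i := by omega
  have h4 : (2*j)/2 = j := by omega
  have h5 : ¬ (i = j) := by omega
  simp only [Yfun, if_pos h, h1, h2, h3, h4, if_true, if_false, if_neg h5]

lemma Y_eo : Yfun n b (2*i) (2*j-1) = 0 := by
  have h : 1 ≤ 2*i ∧ 2*i < 2*j-1 ∧ 2*j-1 ≤ 2*n := by omega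
  have h1 : ¬ ((2*i) % 2 = 1) := by omega
  have h2 : (2*j-1) % 2 = 1 := by omega
  simp only [Yfun, if_pos h, h1, h2, if_true, if_false]

lemma Y_ee : Yfun n b (2*i) (2*j) = (1 - b i) * b j := by
  have h : 1 ≤ 2*i ∧ 2*i < 2*j ∧ 2*j ≤ 2*n := by omega
  have h1 : ¬ ((2*i) % 2 = 1) := by omega
  have h2 : ¬ ((2*j) % 2 = 1) := by omega
  have h3 : (2*i)/2 = i := by omega
  have h4 : (2*j)/2 = j := by omega
  simp only [Yfun, if_pos h, h1, h2, h3, h4, if_false]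

end

lemma Y_formula (n : ℕ) (b : ℕ → ℝ) (hb : ∀ i, 1 ≤ i → i ≤ n → b i = 0 ∨ b i = 1)
    {p q : ℕ} (hp : 1 ≤ p) (hpq : p < q) (hq : q ≤ 2*n) :
    Yfun n b p q = if rankf n b p < rankf n b q then 1 else 0 := by
  have hpF : p ∈ Finset.Icc 1 (2*n) := by simp [Finset.mem_Icc]; omega
  have hqF : q ∈ Finset.Icc 1 (2*n) := by simp [Finset.mem_Icc]; omega
  rw [if_congr (rank_lt_iff n b hpF hqF) rfl rfl]
  by_cases hpo : p % 2 = 1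
  · by_cases hqo : q % 2 = 1
    · -- odd, odd
      set i := (p+1)/2 with hidef
      set j := (q+1)/2 with hjdef
      have hpi : p = 2*i-1 := by omega
      have hqj : q = 2*j-1 := by omega
      have h1 : 1 ≤ i := by omega
      have h2 : i < j := by omega
      have h3 : j ≤ n := by omega
      rw [hpi, hqj, Y_oo n b h1 h2 h3, key_odd n b i (by omega), key_odd n b j (by omega)]
      rcases hb i (by omega) (by omega) with hbi | hbi <;>
        rcases hb j (by omega) (by omega) with hbj | hbj <;>
        norm_num [hbi, hbj] <;>
        first
          | rw [if_pos (by omega)]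
          | (rw [if_neg (by omega)])
          | omega
    · -- odd, even
      set i := (p+1)/2 with hidef
      set j := q/2 with hjdef
      have hpi : p = 2*i-1 := by omega
      have hqj : q = 2*j := by omega
      have h1 : 1 ≤ i := by omega
      have h3 : j ≤ n := by omega
      by_cases hij : i = j
      · rw [hpi, show q = 2*i from by omega, Y_diag n b h1 (by omega),
          key_odd n b i (by omega), key_even n b i (by omega)]
        rcases hb i (by omega) (by omega) with hbi | hbi <;>
          norm_num [hbi] <;>
          first
            | rw [if_pos (by omega)]
            | (rw [if_neg (by omega)])
            | omega
      · have h2 : i < j := by omega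
        rw [hpi, hqj, Y_oe n b h1 h2 h3, key_odd n b i (by omega), key_even n b j (by omega)]
        rcases hb i (by omega) (by omega) with hbi | hbi <;>
          rcases hb j (by omega) (by omega) with hbj | hbj <;>
          norm_num [hbi, hbj] <;>
          first
            | rw [if_pos (by omega)]
            | (rw [if_neg (by omega)])
            | omega
  · by_cases hqo : q % 2 = 1
    · -- even, odd
      set i := p/2 with hidef
      set j := (q+1)/2 with hjdef
      have hpi : p = 2*i := by omega
      have hqj : q = 2*j-1 := by omega
      have h1 : 1 ≤ i := by omega
      have h2 : i < j := by omega
      have h3 : j ≤ n := by omega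
      rw [hpi, hqj, Y_eo n b h1 h2 h3, key_even n b i (by omega), key_odd n b j (by omega)]
      rcases hb i (by omega) (by omega) with hbi | hbi <;>
        rcases hb j (by omega) (by omega) with hbj | hbj <;>
        norm_num [hbi, hbj] <;>
        omega
    · -- even, even
      set i := p/2 with hidef
      set j := q/2 with hjdef
      have hpi : p = 2*i := by omega
      have hqj : q = 2*j := by omega
      have h1 : 1 ≤ i := by omega
      have h2 : i < j := by omega
      have h3 : j ≤ n := by omega
      rw [hpi, hqj, Y_ee n b h1 h2 h3, key_even n b i (by omega), key_even n b j (by omega)]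
      rcases hb i (by omega) (by omega) with hbi | hbi <;>
        rcases hb j (by omega) (by omega) with hbj | hbj <;>
        norm_num [hbi, hbj] <;>
        first
          | rw [if_pos (by omega)]
          | (rw [if_neg (by omega)])
          | omega

lemma Y_mem_FaceF (n : ℕ) (b : ℕ → ℝ) (hb : ∀ i, 1 ≤ i → i ≤ n → b i = 0 ∨ b i = 1) :
    Yfun n b ∈ FaceF n := by
  refine ⟨⟨fun p q h => by simp only [Yfun, if_neg h], rankf n b, rank_bijOn n b,
    fun p q h1 h2 h3 => Y_formula n b hb h1 h2 h3⟩, ?_⟩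
  intro i j h1 h2 h3
  refine ⟨Y_eo n b h1 h2 h3, ?_, ?_⟩
  · rw [Y_diag n b h1 (by omega), Y_ee n b h1 h2 h3, Y_oe n b h1 h2 h3]; ring
  · rw [Y_oo n b h1 h2 h3, Y_diag n b (by omega : 1 ≤ j) h3, Y_oe n b h1 h2 h3]; ring

lemma LOP_vals01 {m : ℕ} {y : ℕ → ℕ → ℝ} (hy : y ∈ LOP m) {p q : ℕ}
    (h1 : 1 ≤ p) (h2 : p < q) (h3 : q ≤ m) : y p q = 0 ∨ y p q = 1 := by
  obtain ⟨-, π, -, hform⟩ := hy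
  rw [hform p q h1 h2 h3]
  split_ifs <;> simp

lemma faceF_vals {n : ℕ} {y : ℕ → ℕ → ℝ} (hy : y ∈ FaceF n) {i j : ℕ}
    (h1 : 1 ≤ i) (h2 : i < j) (h3 : j ≤ n) :
    y (2*i) (2*j) = (1 - y (2*i-1) (2*i)) * y (2*j-1) (2*j) ∧
    y (2*i-1) (2*j-1) = y (2*i-1) (2*i) * (1 - y (2*j-1) (2*j)) ∧
    y (2*i-1) (2*j) = y (2*i-1) (2*i) + y (2*j-1) (2*j)
      - y (2*i-1) (2*i) * y (2*j-1) (2*j) := by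
  obtain ⟨hz, e1, e2⟩ := hy.2 i j h1 h2 h3
  have ha01 := LOP_vals01 hy.1 (show 1 ≤ 2*i-1 by omega) (show 2*i-1 < 2*i by omega)
    (show 2*i ≤ 2*n by omega)
  have hc01 := LOP_vals01 hy.1 (show 1 ≤ 2*j-1 by omega) (show 2*j-1 < 2*j by omega)
    (show 2*j ≤ 2*n by omega)
  have hu01 := LOP_vals01 hy.1 (show 1 ≤ 2*i by omega) (show 2*i < 2*j by omega)
    (show 2*j ≤ 2*n by omega)
  have hv01 := LOP_vals01 hy.1 (show 1 ≤ 2*i-1 by omega) (show 2*i-1 < 2*j by omega)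
    (show 2*j ≤ 2*n by omega)
  have hw01 := LOP_vals01 hy.1 (show 1 ≤ 2*i-1 by omega) (show 2*i-1 < 2*j-1 by omega)
    (show 2*j-1 ≤ 2*n by omega)
  have w0 : y (2*i-1) (2*i) = 0 → y (2*i-1) (2*j-1) = 0 := by
    intro ha0
    obtain ⟨-, π, -, hform⟩ := hy.1
    have hA := hform (2*i-1) (2*i) (by omega) (by omega) (by omega)
    have hZ := hform (2*i) (2*j-1) (by omega) (by omega) (by omega)
    have hW := hform (2*i-1) (2*j-1) (by omega) (by omega) (by omega)
    rw [hA] at ha0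
    rw [hZ] at hz
    have p1 : ¬ π (2*i-1) < π (2*i) := by
      by_contra h; rw [if_pos h] at ha0; norm_num at ha0
    have p2 : ¬ π (2*i) < π (2*j-1) := by
      by_contra h; rw [if_pos h] at hz; norm_num at hz
    rw [hW, if_neg (by omega)]
  refine ⟨?_, ?_, ?_⟩ <;>
  · rcases ha01 with ha | ha <;> rcases hc01 with hc | hc <;> rcases hu01 with hu | hu <;>
      rcases hv01 with hv | hv <;> rcases hw01 with hw | hw <;>
      simp only [ha, hc, hu, hv, hw] at e1 e2 ⊢ <;>
      first
        | (norm_num; done)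
        | (linarith; done)
        | (norm_num at e1; done)
        | (norm_num at e2; done)
        | (have h00 := w0 ha; rw [hw] at h00; norm_num at h00; done)

lemma beta_diag (n : ℕ) (y : ℕ → ℕ → ℝ) {i : ℕ} (h1 : 1 ≤ i) (h3 : i ≤ n) :
    beta n y i i = y (2*i-1) (2*i) := if_pos ⟨h1, rfl, h3⟩

lemma beta_off (n : ℕ) (y : ℕ → ℕ → ℝ) {i j : ℕ} (h1 : 1 ≤ i) (h2 : i < j) (h3 : j ≤ n) :
    beta n y i j = y (2*j-1) (2*j) - y (2*i) (2*j) := by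
  unfold beta
  rw [if_neg (by omega), if_pos ⟨h1, h2, h3⟩]

lemma beta_out (n : ℕ) (y : ℕ → ℕ → ℝ) {i j : ℕ} (h : ¬(1 ≤ i ∧ i ≤ j ∧ j ≤ n)) :
    beta n y i j = 0 := by
  unfold beta
  rw [if_neg (by omega), if_neg (by omega)]

lemma faceF_eq {n : ℕ} {y : ℕ → ℕ → ℝ} (hy : y ∈ FaceF n) :
    y = Yfun n (fun k => y (2*k-1) (2*k)) := by
  set b : ℕ → ℝ := fun k => y (2*k-1) (2*k) with hbdef
  funext p q
  by_cases h : 1 ≤ p ∧ p < q ∧ q ≤ 2*n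
  · obtain ⟨hp, hpq, hq⟩ := h
    by_cases hpo : p % 2 = 1
    · by_cases hqo : q % 2 = 1
      · have hpi : p = 2*((p+1)/2)-1 := by omega
        have hqj : q = 2*((q+1)/2)-1 := by omega
        have h1 : 1 ≤ (p+1)/2 := by omega
        have h2 : (p+1)/2 < (q+1)/2 := by omega
        have h3 : (q+1)/2 ≤ n := by omega
        rw [hpi, hqj, Y_oo n b h1 h2 h3]
        exact (faceF_vals hy h1 h2 h3).2.1
      · by_cases hij : (p+1)/2 = q/2
        · obtain ⟨j0, rfl⟩ : ∃ t, q = 2*t := ⟨q/2, by omega⟩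
          have hp' : p = 2*j0-1 := by omega
          rw [hp', Y_diag n b (by omega) (by omega)]
        · have hpi : p = 2*((p+1)/2)-1 := by omega
          have hqj : q = 2*(q/2) := by omega
          have h1 : 1 ≤ (p+1)/2 := by omega
          have h2 : (p+1)/2 < q/2 := by omega
          have h3 : q/2 ≤ n := by omega
          rw [hpi, hqj, Y_oe n b h1 h2 h3]
          exact (faceF_vals hy h1 h2 h3).2.2
    · by_cases hqo : q % 2 = 1
      · have hpi : p = 2*(p/2) := by omega
        have hqj : q = 2*((q+1)/2)-1 := by omega
        have h1 : 1 ≤ p/2 := by omega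
        have h2 : p/2 < (q+1)/2 := by omega
        have h3 : (q+1)/2 ≤ n := by omega
        rw [hpi, hqj, Y_eo n b h1 h2 h3]
        exact (hy.2 (p/2) ((q+1)/2) h1 h2 h3).1
      · have hpi : p = 2*(p/2) := by omega
        have hqj : q = 2*(q/2) := by omega
        have h1 : 1 ≤ p/2 := by omega
        have h2 : p/2 < q/2 := by omega
        have h3 : q/2 ≤ n := by omega
        rw [hpi, hqj, Y_ee n b h1 h2 h3]
        exact (faceF_vals hy h1 h2 h3).1
  · rw [hy.1.1 p q h]
    simp only [Yfun, if_neg h]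

/-- for every `n`, the map `β` is a bijection from the face `F`
onto `BQP n`. -/
theorem beta_bijOn (n : ℕ) : Set.BijOn (beta n) (FaceF n) (BQP n) := by
  have hb01 : ∀ (y : ℕ → ℕ → ℝ), y ∈ FaceF n → ∀ i, 1 ≤ i → i ≤ n →
      y (2*i-1) (2*i) = 0 ∨ y (2*i-1) (2*i) = 1 := fun y hy i h1 h2 =>
    LOP_vals01 hy.1 (by omega) (by omega) (by omega)
  refine ⟨?_, ?_, ?_⟩
  · -- MapsTo
    intro y hy
    refine ⟨?_, ?_, ?_⟩
    · intro i j h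
      exact beta_out n y h
    · intro i j h1 h2 h3
      rcases eq_or_lt_of_le h2 with heq | hlt
      · subst heq
        rw [beta_diag n y h1 h3]
        exact hb01 y hy i h1 h3
      · rw [beta_off n y h1 hlt h3]
        have hu := (faceF_vals hy h1 hlt h3).1
        rw [hu]
        rcases hb01 y hy i h1 (by omega) with ha | ha <;>
          rcases hb01 y hy j (by omega) h3 with hc | hc <;>
          rw [ha, hc] <;> norm_num
    · intro i j h1 h2 h3
      have hu := (faceF_vals hy h1 h2 h3).1
      rw [beta_off n y h1 h2 h3, beta_diag n y h1 (by omega), beta_diag n y (by omega : 1 ≤ j) h3,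
        hu]
      ring
  · -- InjOn
    intro y hy y' hy' heq
    have hb : (fun k => y (2*k-1) (2*k)) = (fun k => y' (2*k-1) (2*k)) := by
      funext k
      by_cases hk : 1 ≤ k ∧ k ≤ n
      · have h1 := congrFun (congrFun heq k) k
        rw [beta_diag n y hk.1 hk.2, beta_diag n y' hk.1 hk.2] at h1
        exact h1
      · rw [hy.1.1 _ _ (by omega), hy'.1.1 _ _ (by omega)]
    rw [faceF_eq hy, faceF_eq hy', hb]
  · -- SurjOn
    intro x hx
    obtain ⟨hx0, hx01, hxm⟩ := hx
    refine ⟨Yfun n (fun k => x k k), Y_mem_FaceF n _ (fun i h1 h2 => hx01 i i h1 le_rfl h2), ?_⟩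
    funext i j
    by_cases hd : 1 ≤ i ∧ i = j ∧ j ≤ n
    · obtain ⟨h1, rfl, h3⟩ := hd
      rw [beta_diag n _ h1 h3, Y_diag n _ h1 h3]
    · by_cases hd2 : 1 ≤ i ∧ i < j ∧ j ≤ n
      · obtain ⟨h1, h2, h3⟩ := hd2
        rw [beta_off n _ h1 h2 h3, Y_diag n _ (by omega : 1 ≤ j) h3,
          Y_ee n _ h1 h2 h3, hxm i j h1 h2 h3]
        ring
      · rw [beta_out n _ (by omega), hx0 i j (by omega)]
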